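/- Let v be a polynomial of total degree at most p on the unit simplex K^d in ℝ^d, d ≥ 2, and suppose the inverse inequality with constant C_{p,d−1} holds on the (d−1)-dimensional unit simplex for degree-p polynomials. Then on K_* = {x ∈ K^d : x_d < 1 − 1/d} one has ‖∂v/∂x_1‖²_{L²(K_*)} ≤ d² C_{p,d−1}² ‖v‖²_{L²(K_*)}. -/

import Mathlib

open MeasureTheory Real Finset MvPolynomial ENNReal

/-- The unit simplex in `ℝ^d`. -/
def unitSimplex (d : ℕ) : Set (Fin d → ℝ) :=
  {x | (∀ i, 0 ≤ x i) ∧ ∑ i, x i ≤ 1}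

/-- Slicing bound on `K_* = {x ∈ K^d : x_d < 1 - 1/d}` (here `d = n + 2 ≥ 2`): if the
inverse inequality with constant `C` holds on the `(d-1)`-dimensional unit simplex for
polynomials of total degree `≤ p`, then every polynomial `v` of total degree `≤ p` on `K^d`
satisfies `‖∂v/∂x_1‖²_{L²(K_*)} ≤ d² C² ‖v‖²_{L²(K_*)}`. -/
noncomputable def subs (n : ℕ) (t s : ℝ) : Fin (n + 2) → MvPolynomial (Fin (n + 1)) ℝ :=
  Fin.snoc (fun i => C t * X i) (C s)

lemma totalDegree_subs_le (n : ℕ) (t s : ℝ) (i : Fin (n + 2)) :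
    (subs n t s i).totalDegree ≤ 1 := by
  refine Fin.lastCases ?_ (fun k => ?_) i
  · simp [subs, totalDegree_C]
  · simp only [subs, Fin.snoc_castSucc]
    exact (totalDegree_mul _ _).trans (by simp [totalDegree_C, totalDegree_X])

lemma totalDegree_aeval_subs_le (n : ℕ) (t s : ℝ) (q : MvPolynomial (Fin (n + 2)) ℝ) :
    (aeval (subs n t s) q).totalDegree ≤ q.totalDegree := by
  conv_lhs => rw [q.as_sum]
  rw [map_sum]
  refine (totalDegree_finset_sum _ _).trans (Finset.sup_le fun m hm => ?_)
  rw [aeval_monomial]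
  refine (totalDegree_mul _ _).trans ?_
  have h1 : (algebraMap ℝ (MvPolynomial (Fin (n+1)) ℝ) (coeff m q)).totalDegree = 0 :=
    totalDegree_C _
  rw [h1, zero_add]
  refine (totalDegree_finset_prod _ _).trans ?_
  calc ∑ i ∈ m.support, (subs n t s i ^ m i).totalDegree
      ≤ ∑ i ∈ m.support, m i :=
        Finset.sum_le_sum fun i _ => (totalDegree_pow _ _).trans (by
          simpa using Nat.mul_le_mul_left (m i) (totalDegree_subs_le n t s i))
    _ = m.sum fun _ e => e := rfl
    _ ≤ q.totalDegree := le_totalDegree hm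

lemma pderiv_subs (n : ℕ) (t s : ℝ) (i : Fin (n + 2)) :
    pderiv (0 : Fin (n + 1)) (subs n t s i)
      = C t * aeval (subs n t s) (pderiv (0 : Fin (n + 2)) (X i : MvPolynomial (Fin (n+2)) ℝ)) := by
  refine Fin.lastCases ?_ (fun k => ?_) i
  · rw [show subs n t s (Fin.last (n+1)) = C s from Fin.snoc_last _ _]
    rw [pderiv_X_of_ne (by simp [Fin.ext_iff]), pderiv_C, map_zero, mul_zero]
  · rw [show subs n t s k.castSucc = C t * X k from Fin.snoc_castSucc _ _ _]
    rcases eq_or_ne k 0 with rfl | hk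
    · rw [Derivation.leibniz, pderiv_C, pderiv_X_self, Fin.castSucc_zero, pderiv_X_self,
        map_one, mul_one]
      simp
    · have hk2 : k.castSucc ≠ (0 : Fin (n + 2)) := fun h => hk (by
        rw [← Fin.castSucc_zero] at h; exact Fin.castSucc_injective _ h)
      rw [Derivation.leibniz, pderiv_C, pderiv_X_of_ne hk, pderiv_X_of_ne hk2]
      simp

lemma pderiv_aeval_subs (n : ℕ) (t s : ℝ) (q : MvPolynomial (Fin (n + 2)) ℝ) :
    pderiv (0 : Fin (n + 1)) (aeval (subs n t s) q)
      = C t * aeval (subs n t s) (pderiv (0 : Fin (n + 2)) q) := by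
  induction q using MvPolynomial.induction_on with
  | C a => simp [pderiv_C]
  | add p q hp hq => simp only [map_add, hp, hq, mul_add]
  | mul_X p i hp =>
      rw [map_mul, aeval_X, Derivation.leibniz, Derivation.leibniz]
      simp only [smul_eq_mul, map_add, map_mul, aeval_X, hp, pderiv_subs n t s i]
      ring

lemma eval_aeval_subs (n : ℕ) (t s : ℝ) (q : MvPolynomial (Fin (n + 2)) ℝ)
    (z : Fin (n + 1) → ℝ) :
    eval z (aeval (subs n t s) q) = eval (Fin.snoc (fun i => t * z i) s) q := by
  have h : eval z (aeval (subs n t s) q)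
      = aeval (fun i => aeval z (subs n t s i)) q := by
    rw [aeval_eq_bind₁, show (eval z : MvPolynomial (Fin (n+1)) ℝ →+* ℝ)
        (bind₁ (subs n t s) q) = aeval z (bind₁ (subs n t s) q) from rfl, aeval_bind₁]
  rw [h]
  have h2 : (fun i => aeval z (subs n t s i)) = Fin.snoc (fun i => t * z i) s := by
    funext i
    refine Fin.lastCases ?_ (fun k => ?_) i
    · simp [subs, Fin.snoc_last]
    · simp [subs, Fin.snoc_castSucc]
  rw [h2]
  rw [aeval_def, Algebra.algebraMap_self]
  rfl



lemma measurableSet_aux (d : ℕ) (t : ℝ) :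
    MeasurableSet {y : Fin d → ℝ | (∀ i, 0 ≤ y i) ∧ ∑ i, y i ≤ t} := by
  have he : {y : Fin d → ℝ | (∀ i, 0 ≤ y i) ∧ ∑ i, y i ≤ t}
      = (⋂ i, {y : Fin d → ℝ | 0 ≤ y i}) ∩ {y : Fin d → ℝ | ∑ i, y i ≤ t} := by
    ext y; simp [Set.mem_iInter]
  rw [he]
  exact (MeasurableSet.iInter fun i =>
      measurableSet_le measurable_const (measurable_pi_apply i)).inter
    (measurableSet_le (Finset.measurable_sum _ fun i _ => measurable_pi_apply i)
      measurable_const)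

lemma measurableSet_unitSimplex (d : ℕ) : MeasurableSet (unitSimplex d) :=
  measurableSet_aux d 1

lemma aux_subset_ball (d : ℕ) (t : ℝ) (ht : t ≤ 1) :
    {y : Fin d → ℝ | (∀ i, 0 ≤ y i) ∧ ∑ i, y i ≤ t} ⊆ Metric.closedBall 0 1 := by
  rintro x ⟨h0, h1⟩
  rw [Metric.mem_closedBall, dist_zero_right]
  refine pi_norm_le_iff_of_nonneg zero_le_one |>.2 fun i => ?_
  rw [Real.norm_eq_abs, abs_of_nonneg (h0 i)]
  calc x i ≤ ∑ j, x j := Finset.single_le_sum (fun j _ => h0 j) (Finset.mem_univ i)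
    _ ≤ 1 := h1.trans ht

lemma integrableOn_sq (d : ℕ) (A : Set (Fin d → ℝ)) (hA : MeasurableSet A)
    (hsub : A ⊆ Metric.closedBall 0 1) (q : MvPolynomial (Fin d) ℝ) :
    IntegrableOn (fun x => (eval x q) ^ 2) A := by
  have hc : Continuous fun x : Fin d → ℝ => (eval x q) ^ 2 :=
    (MvPolynomial.continuous_eval q).pow 2
  exact (hc.continuousOn.integrableOn_compact (isCompact_closedBall 0 1)).mono_set hsub

lemma lint_sq_eq (d : ℕ) (A : Set (Fin d → ℝ)) (hA : MeasurableSet A)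
    (hsub : A ⊆ Metric.closedBall 0 1) (q : MvPolynomial (Fin d) ℝ) :
    ∫⁻ x in A, ENNReal.ofReal ((eval x q) ^ 2)
      = ENNReal.ofReal (∫ x in A, (eval x q) ^ 2) :=
  (ofReal_integral_eq_lintegral_ofReal (integrableOn_sq d A hA hsub q)
    (Filter.Eventually.of_forall fun x => sq_nonneg _)).symm

lemma lintegral_scaled_simplex {k : ℕ} (t : ℝ) (ht : 0 < t)
    (G : (Fin (k + 1) → ℝ) → ℝ≥0∞) (hG : Measurable G) :
    ∫⁻ y in {y : Fin (k + 1) → ℝ | (∀ i, 0 ≤ y i) ∧ ∑ i, y i ≤ t}, G y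
      = ENNReal.ofReal (t ^ (k + 1)) * ∫⁻ z in unitSimplex (k + 1), G (t • z) := by
  have hf : Measurable (fun z : Fin (k + 1) → ℝ => t • z) :=
    (continuous_const_smul t).measurable
  have hfr : Module.finrank ℝ (Fin (k + 1) → ℝ) = k + 1 := by
    rw [Module.finrank_pi]; exact Fintype.card_fin _
  have hmap : Measure.map (fun z : Fin (k + 1) → ℝ => t • z) volume
      = ENNReal.ofReal |(t ^ (k + 1))⁻¹| • volume := by
    have := Measure.map_addHaar_smul (μ := (volume : Measure (Fin (k + 1) → ℝ)))
      (r := t) ht.ne'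
    rwa [hfr] at this
  have hvol : (volume : Measure (Fin (k + 1) → ℝ))
      = ENNReal.ofReal (t ^ (k + 1)) • Measure.map (fun z : Fin (k + 1) → ℝ => t • z) volume := by
    rw [hmap, smul_smul, ← ENNReal.ofReal_mul (by positivity),
      abs_of_nonneg (by positivity), mul_inv_cancel₀ (by positivity), ENNReal.ofReal_one, one_smul]
  have hpre : (fun z : Fin (k + 1) → ℝ => t • z) ⁻¹' {y | (∀ i, 0 ≤ y i) ∧ ∑ i, y i ≤ t}
      = unitSimplex (k + 1) := by
    ext z
    simp only [Set.mem_preimage, Set.mem_setOf_eq, unitSimplex, Pi.smul_apply, smul_eq_mul,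
      ← Finset.mul_sum]
    constructor
    · rintro ⟨h0, h1⟩
      exact ⟨fun i => nonneg_of_mul_nonneg_right (h0 i) ht,
        (mul_le_iff_le_one_right ht).1 h1⟩
    · rintro ⟨h0, h1⟩
      exact ⟨fun i => mul_nonneg ht.le (h0 i), (mul_le_iff_le_one_right ht).2 h1⟩
  calc ∫⁻ y in {y : Fin (k + 1) → ℝ | (∀ i, 0 ≤ y i) ∧ ∑ i, y i ≤ t}, G y ∂volume
      = ENNReal.ofReal (t ^ (k + 1)) * ∫⁻ y in {y | (∀ i, 0 ≤ y i) ∧ ∑ i, y i ≤ t}, G y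
          ∂(Measure.map (fun z : Fin (k + 1) → ℝ => t • z) volume) := by
        conv_lhs => rw [hvol]
        rw [setLIntegral_smul_measure, smul_eq_mul]
    _ = ENNReal.ofReal (t ^ (k + 1)) * ∫⁻ z in unitSimplex (k + 1), G (t • z) := by
        rw [setLIntegral_map (measurableSet_aux _ t) hG hf, hpre]

lemma inner_step (n p : ℕ) (C : ℝ) (hC : 0 ≤ C)
    (hinv : ∀ w : MvPolynomial (Fin (n + 1)) ℝ, w.totalDegree ≤ p → ∀ i : Fin (n + 1),
      ∫ x in unitSimplex (n + 1), (MvPolynomial.eval x (MvPolynomial.pderiv i w)) ^ 2 ≤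
        C ^ 2 * ∫ x in unitSimplex (n + 1), (MvPolynomial.eval x w) ^ 2)
    (v : MvPolynomial (Fin (n + 2)) ℝ) (hv : v.totalDegree ≤ p)
    (s : ℝ) (hs0 : 0 ≤ s) (hs1 : s < 1 - 1 / ((n : ℝ) + 2)) :
    ∫⁻ y in {y : Fin (n + 1) → ℝ | (∀ i, 0 ≤ y i) ∧ ∑ i, y i ≤ 1 - s},
        ENNReal.ofReal ((eval (Fin.snoc y s) (pderiv (0 : Fin (n + 2)) v)) ^ 2)
      ≤ ENNReal.ofReal (((n : ℝ) + 2) ^ 2 * C ^ 2) *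
        ∫⁻ y in {y : Fin (n + 1) → ℝ | (∀ i, 0 ≤ y i) ∧ ∑ i, y i ≤ 1 - s},
          ENNReal.ofReal ((eval (Fin.snoc y s) v) ^ 2) := by
  set t := 1 - s with ht_def
  have hd : (0:ℝ) < (n : ℝ) + 2 := by positivity
  have htd : 1 / ((n : ℝ) + 2) ≤ t := by
    rw [ht_def]; linarith
  have ht : 0 < t := lt_of_lt_of_le (by positivity) htd
  set w := aeval (subs n t s) v with hw_def
  have hw : w.totalDegree ≤ p := (totalDegree_aeval_subs_le n t s v).trans hv
  have hsnoc : Measurable (fun y : Fin (n + 1) → ℝ => (Fin.snoc y s : Fin (n + 2) → ℝ)) := by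
    refine measurable_pi_lambda _ fun i => ?_
    refine Fin.lastCases ?_ (fun k => ?_) i
    · simpa [Fin.snoc_last] using measurable_const
    · simpa [Fin.snoc_castSucc] using measurable_pi_apply k
  have hGmeas : ∀ q : MvPolynomial (Fin (n + 2)) ℝ, Measurable
      (fun y : Fin (n + 1) → ℝ => ENNReal.ofReal ((eval (Fin.snoc y s) q) ^ 2)) := fun q =>
    ((((MvPolynomial.continuous_eval q).measurable.comp hsnoc).pow_const 2)).ennreal_ofReal
  rw [lintegral_scaled_simplex t ht _ (hGmeas (pderiv 0 v)),
    lintegral_scaled_simplex t ht _ (hGmeas v)]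
  have h2 : ∀ z : Fin (n + 1) → ℝ, eval (Fin.snoc (t • z) s) v = eval z w := fun z => by
    rw [show (t • z : Fin (n + 1) → ℝ) = fun i => t * z i from rfl, ← eval_aeval_subs]
  have h1 : ∀ z : Fin (n + 1) → ℝ, eval (Fin.snoc (t • z) s) (pderiv (0 : Fin (n + 2)) v)
      = t⁻¹ * eval z (pderiv (0 : Fin (n + 1)) w) := fun z => by
    rw [show (t • z : Fin (n + 1) → ℝ) = fun i => t * z i from rfl, ← eval_aeval_subs]
    have h := congrArg (eval z) (pderiv_aeval_subs n t s v)
    rw [map_mul, eval_C] at h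
    rw [show (pderiv (0 : Fin (n + 1)) w) = pderiv (0 : Fin (n + 1)) ((aeval (subs n t s)) v)
      from rfl, h]
    field_simp
  simp_rw [h1, h2, mul_pow, ENNReal.ofReal_mul (by positivity : (0:ℝ) ≤ t⁻¹ ^ 2),
    lintegral_const_mul' _ _ ENNReal.ofReal_ne_top]
  have hKsub : unitSimplex (n + 1) ⊆ Metric.closedBall 0 1 := aux_subset_ball (n + 1) 1 le_rfl
  have hAB : (∫⁻ z in unitSimplex (n + 1),
        ENNReal.ofReal ((eval z (pderiv (0 : Fin (n + 1)) w)) ^ 2))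
      ≤ ENNReal.ofReal (C ^ 2) * ∫⁻ z in unitSimplex (n + 1),
        ENNReal.ofReal ((eval z w) ^ 2) := by
    rw [lint_sq_eq _ _ (measurableSet_unitSimplex _) hKsub (pderiv 0 w),
      lint_sq_eq _ _ (measurableSet_unitSimplex _) hKsub w,
      ← ENNReal.ofReal_mul (by positivity : (0:ℝ) ≤ C ^ 2)]
    exact ENNReal.ofReal_le_ofReal (hinv w hw 0)
  have ht2 : ENNReal.ofReal (t⁻¹ ^ 2) ≤ ENNReal.ofReal (((n : ℝ) + 2) ^ 2) := by
    refine ENNReal.ofReal_le_ofReal ?_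
    have h1 : t⁻¹ ≤ (n : ℝ) + 2 := by
      have := one_div_le_one_div_of_le (by positivity : (0:ℝ) < 1 / ((n:ℝ)+2)) htd
      rwa [one_div_one_div, one_div] at this
    exact pow_le_pow_left₀ (by positivity) h1 2
  calc ENNReal.ofReal (t ^ (n + 1)) * (ENNReal.ofReal (t⁻¹ ^ 2) *
        ∫⁻ z in unitSimplex (n + 1), ENNReal.ofReal ((eval z (pderiv (0:Fin (n+1)) w)) ^ 2))
      ≤ ENNReal.ofReal (t ^ (n + 1)) * (ENNReal.ofReal (((n : ℝ) + 2) ^ 2) *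
        (ENNReal.ofReal (C ^ 2) * ∫⁻ z in unitSimplex (n + 1),
          ENNReal.ofReal ((eval z w) ^ 2))) :=
        mul_le_mul_right (mul_le_mul' ht2 hAB) _
    _ = ENNReal.ofReal (((n : ℝ) + 2) ^ 2 * C ^ 2) *
        (ENNReal.ofReal (t ^ (n + 1)) * ∫⁻ z in unitSimplex (n + 1),
          ENNReal.ofReal ((eval z w) ^ 2)) := by
        rw [ENNReal.ofReal_mul (by positivity : (0:ℝ) ≤ ((n:ℝ)+2) ^ 2)]
        ring

lemma sum_snoc_aux (n : ℕ) (y : Fin (n + 1) → ℝ) (s : ℝ) :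
    ∑ i : Fin (n + 2), (Fin.snoc y s : Fin (n + 2) → ℝ) i = ∑ i : Fin (n + 1), y i + s := by
  rw [Fin.sum_univ_castSucc]
  simp


theorem slicing_inverse_inequality (n p : ℕ) (C : ℝ) (hC : 0 ≤ C)
    (hinv : ∀ w : MvPolynomial (Fin (n + 1)) ℝ, w.totalDegree ≤ p → ∀ i : Fin (n + 1),
      ∫ x in unitSimplex (n + 1), (MvPolynomial.eval x (MvPolynomial.pderiv i w)) ^ 2 ≤
        C ^ 2 * ∫ x in unitSimplex (n + 1), (MvPolynomial.eval x w) ^ 2)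
    (v : MvPolynomial (Fin (n + 2)) ℝ) (hv : v.totalDegree ≤ p) :
    ∫ x in {x ∈ unitSimplex (n + 2) | x (Fin.last (n + 1)) < 1 - 1 / (n + 2 : ℝ)},
        (MvPolynomial.eval x (MvPolynomial.pderiv 0 v)) ^ 2 ≤
      ((n + 2 : ℝ)) ^ 2 * C ^ 2 *
        ∫ x in {x ∈ unitSimplex (n + 2) | x (Fin.last (n + 1)) < 1 - 1 / (n + 2 : ℝ)},
          (MvPolynomial.eval x v) ^ 2 := by
  set S : Set (Fin (n + 2) → ℝ) :=
    {x ∈ unitSimplex (n + 2) | x (Fin.last (n + 1)) < 1 - 1 / (n + 2 : ℝ)} with hS_def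
  have hSmeas : MeasurableSet S :=
    (measurableSet_unitSimplex (n + 2)).inter
      (measurableSet_lt (measurable_pi_apply _) measurable_const)
  have hsub : S ⊆ Metric.closedBall 0 1 := fun x hx =>
    aux_subset_ball (n + 2) 1 le_rfl hx.1
  set c : ℝ := ((n : ℝ) + 2) ^ 2 * C ^ 2 with hc_def
  have hc0 : 0 ≤ c := by positivity
  set F₁ : (Fin (n + 2) → ℝ) → ℝ≥0∞ :=
    fun x => ENNReal.ofReal ((eval x (pderiv (0 : Fin (n + 2)) v)) ^ 2) with hF₁_def
  set F₂ : (Fin (n + 2) → ℝ) → ℝ≥0∞ :=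
    fun x => ENNReal.ofReal ((eval x v) ^ 2) with hF₂_def
  have hF₁m : Measurable F₁ :=
    ((MvPolynomial.continuous_eval _).measurable.pow_const 2).ennreal_ofReal
  have hF₂m : Measurable F₂ :=
    ((MvPolynomial.continuous_eval _).measurable.pow_const 2).ennreal_ofReal
  -- key inequality at the level of lintegrals
  have LI : ∫⁻ x in S, F₁ x ≤ ENNReal.ofReal c * ∫⁻ x in S, F₂ x := by
    set e := MeasurableEquiv.piFinSuccAbove (fun _ : Fin (n + 2) => ℝ) (Fin.last (n + 1))
      with he_def
    have mp := volume_preserving_piFinSuccAbove (fun _ : Fin (n + 2) => ℝ) (Fin.last (n + 1))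
    have he : ∀ (q : ℝ × (Fin (n + 1) → ℝ)), e.symm q = Fin.snoc q.2 q.1 := by
      intro q
      simp only [he_def, MeasurableEquiv.piFinSuccAbove_symm_apply, Fin.insertNthEquiv,
        Equiv.coe_fn_mk, Fin.insertNth_last']
    have key : ∀ F : (Fin (n + 2) → ℝ) → ℝ≥0∞, Measurable F →
        ∫⁻ x in S, F x
          = ∫⁻ s : ℝ, ∫⁻ y : Fin (n + 1) → ℝ, S.indicator F (Fin.snoc y s) := by
      intro F hF
      rw [← lintegral_indicator hSmeas]
      rw [← (mp.symm e).lintegral_comp (hF.indicator hSmeas)]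
      rw [Measure.volume_eq_prod,
        lintegral_prod (fun z : ℝ × (Fin (n + 1) → ℝ) => S.indicator F (e.symm z))
          (((hF.indicator hSmeas).comp e.symm.measurable).aemeasurable)]
      simp_rw [he]
    rw [key F₁ hF₁m, key F₂ hF₂m]
    have hpt : ∀ s : ℝ,
        (∫⁻ y : Fin (n + 1) → ℝ, S.indicator F₁ (Fin.snoc y s))
          ≤ ENNReal.ofReal c * ∫⁻ y : Fin (n + 1) → ℝ, S.indicator F₂ (Fin.snoc y s) := by
      intro s
      by_cases hs : 0 ≤ s ∧ s < 1 - 1 / ((n : ℝ) + 2)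
      · have hmem : ∀ y : Fin (n + 1) → ℝ,
            ((Fin.snoc y s : Fin (n + 2) → ℝ) ∈ S)
              ↔ y ∈ {y : Fin (n + 1) → ℝ | (∀ i, 0 ≤ y i) ∧ ∑ i, y i ≤ 1 - s} := by
          intro y
          constructor
          · rintro ⟨⟨h0, h1⟩, _⟩
            refine ⟨fun i => by simpa using h0 i.castSucc, ?_⟩
            rw [sum_snoc_aux] at h1
            linarith
          · rintro ⟨h0, h1⟩
            refine ⟨⟨fun i => ?_, ?_⟩, ?_⟩
            · refine Fin.lastCases ?_ (fun k => ?_) i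
              · simpa using hs.1
              · simpa using h0 k
            · rw [sum_snoc_aux]; linarith
            · simpa using hs.2
        have hind : ∀ (F : (Fin (n + 2) → ℝ) → ℝ≥0∞) (y : Fin (n + 1) → ℝ),
            S.indicator F (Fin.snoc y s)
              = Set.indicator {y : Fin (n + 1) → ℝ | (∀ i, 0 ≤ y i) ∧ ∑ i, y i ≤ 1 - s}
                  (fun y => F (Fin.snoc y s)) y := by
          intro F y
          by_cases h : y ∈ {y : Fin (n + 1) → ℝ | (∀ i, 0 ≤ y i) ∧ ∑ i, y i ≤ 1 - s}
          · rw [Set.indicator_of_mem h, Set.indicator_of_mem ((hmem y).2 h)]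
          · rw [Set.indicator_of_notMem h,
              Set.indicator_of_notMem (fun hx => h ((hmem y).1 hx))]
        simp_rw [hind F₁, hind F₂]
        rw [lintegral_indicator (measurableSet_aux _ _), lintegral_indicator (measurableSet_aux _ _)]
        exact inner_step n p C hC hinv v hv s hs.1 hs.2
      · have hz : ∀ (F : (Fin (n + 2) → ℝ) → ℝ≥0∞) (y : Fin (n + 1) → ℝ),
            S.indicator F (Fin.snoc y s) = 0 := by
          intro F y
          refine Set.indicator_of_notMem (fun hx => hs ⟨?_, ?_⟩) F
          · simpa using hx.1.1 (Fin.last (n + 1))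
          · simpa using hx.2
        simp_rw [hz F₁, hz F₂]
        simp
    calc (∫⁻ s : ℝ, ∫⁻ y : Fin (n + 1) → ℝ, S.indicator F₁ (Fin.snoc y s))
        ≤ ∫⁻ s : ℝ, ENNReal.ofReal c * ∫⁻ y : Fin (n + 1) → ℝ, S.indicator F₂ (Fin.snoc y s) :=
          lintegral_mono hpt
      _ = ENNReal.ofReal c * ∫⁻ s : ℝ, ∫⁻ y : Fin (n + 1) → ℝ, S.indicator F₂ (Fin.snoc y s) :=
          lintegral_const_mul' _ _ ENNReal.ofReal_ne_top
  -- convert Bochner integrals to lintegrals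
  have hL : ∫ x in S, (eval x (pderiv (0 : Fin (n + 2)) v)) ^ 2 = (∫⁻ x in S, F₁ x).toReal := by
    rw [hF₁_def, lint_sq_eq _ S hSmeas hsub (pderiv 0 v),
      ENNReal.toReal_ofReal (integral_nonneg fun x => sq_nonneg _)]
  have hR : ∫ x in S, (eval x v) ^ 2 = (∫⁻ x in S, F₂ x).toReal := by
    rw [hF₂_def, lint_sq_eq _ S hSmeas hsub v,
      ENNReal.toReal_ofReal (integral_nonneg fun x => sq_nonneg _)]
  have hBne : (∫⁻ x in S, F₂ x) ≠ ⊤ := by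
    rw [hF₂_def, lint_sq_eq _ S hSmeas hsub v]
    exact ENNReal.ofReal_ne_top
  have hfinal : ((n : ℝ) + 2) ^ 2 * C ^ 2 * ∫ x in S, (eval x v) ^ 2
      = c * (∫⁻ x in S, F₂ x).toReal := by rw [hR]
  rw [hL]
  calc (∫⁻ x in S, F₁ x).toReal
      ≤ (ENNReal.ofReal c * ∫⁻ x in S, F₂ x).toReal :=
        ENNReal.toReal_mono (ENNReal.mul_ne_top ENNReal.ofReal_ne_top hBne) LI
    _ = c * (∫⁻ x in S, F₂ x).toReal := by
        rw [ENNReal.toReal_mul, ENNReal.toReal_ofReal hc0]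
    _ = ((n + 2 : ℝ)) ^ 2 * C ^ 2 * ∫ x in S, (eval x v) ^ 2 := by
        rw [hfinal]
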